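/- The biconic conjunction of lifts equals the lift of the intersection: for polyhedral cones C, D in ℝ^d, BL(C) ∧ BL(D) = BL(C ∩ D), and dually BL(C) ∨ BL(D) = BL(C + D). -/

import Mathlib

open RealInnerProductSpace Pointwise

/-- The polar cone `C° = {z | ⟨x,z⟩ ≤ 0 ∀ x ∈ C}`. -/
def polarCone {E : Type*} [NormedAddCommGroup E] [InnerProductSpace ℝ E] (C : Set E) : Set E :=
  {z | ∀ x ∈ C, ⟪x, z⟫ ≤ 0}

/-- A polyhedral cone: a finite intersection of closed linear half-spaces. -/
def IsPolyhedralCone {E : Type*} [NormedAddCommGroup E] [InnerProductSpace ℝ E]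
    (C : Set E) : Prop :=
  ∃ (k : ℕ) (A : Fin k → E), C = {x | ∀ i, ⟪A i, x⟫ ≤ 0}

/-- The biconic lift `BL(C) = {(x,z) ∈ C × C° | ⟨x,z⟩ = 0}`. -/
def biconicLift {E : Type*} [NormedAddCommGroup E] [InnerProductSpace ℝ E] (C : Set E) :
    Set (E × E) :=
  {p | p.1 ∈ C ∧ p.2 ∈ polarCone C ∧ ⟪p.1, p.2⟫ = 0}

/-- The biconic conjunction `M ∧ N := {(x, x'+y') | (x,x') ∈ M, (x,y') ∈ N}`. -/
def bconj {E : Type*} [Add E] (M N : Set (E × E)) : Set (E × E) :=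
  {p | ∃ x' y', (p.1, x') ∈ M ∧ (p.1, y') ∈ N ∧ p.2 = x' + y'}

/-- The biconic disjunction `M ∨ N := {(x+y, x') | (x,x') ∈ M, (y,x') ∈ N}`. -/
def bdisj {E : Type*} [Add E] (M N : Set (E × E)) : Set (E × E) :=
  {p | ∃ x y, (x, p.2) ∈ M ∧ (y, p.2) ∈ N ∧ p.1 = x + y}

section Aux

variable {E : Type*} [NormedAddCommGroup E] [InnerProductSpace ℝ E]

/-- The cone generated by a finite family of vectors. -/
def coneGen {ι : Type*} [Fintype ι] (v : ι → E) : Set E :=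
  {z | ∃ c : ι → ℝ, (∀ i, 0 ≤ c i) ∧ ∑ i, c i • v i = z}

lemma isClosed_coneGen_of_linearIndependent {ι : Type*} [Fintype ι] [FiniteDimensional ℝ E]
    (v : ι → E) (hv : LinearIndependent ℝ v) : IsClosed (coneGen v) := by
  classical
  let L : (ι → ℝ) →ₗ[ℝ] E :=
    { toFun := fun c => ∑ i, c i • v i
      map_add' := by intro a b; simp [add_smul, Finset.sum_add_distrib]
      map_smul' := by intro r a; simp [smul_smul, Finset.smul_sum] }
  have hker : LinearMap.ker L = ⊥ := by
    rw [LinearMap.ker_eq_bot']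
    intro c hc
    funext i
    exact Fintype.linearIndependent_iff.mp hv c hc i
  have hemb := LinearMap.isClosedEmbedding_of_injective (f := L) hker
  have horth : IsClosed {c : ι → ℝ | ∀ i, 0 ≤ c i} := by
    have : {c : ι → ℝ | ∀ i, 0 ≤ c i} = ⋂ i, {c : ι → ℝ | 0 ≤ c i} := by
      ext c; simp
    rw [this]
    exact isClosed_iInter fun i => isClosed_le continuous_const (continuous_apply i)
  have : coneGen v = L '' {c : ι → ℝ | ∀ i, 0 ≤ c i} := by
    ext z
    constructor
    · rintro ⟨c, hc, rfl⟩; exact ⟨c, hc, rfl⟩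
    · rintro ⟨c, hc, rfl⟩; exact ⟨c, hc, rfl⟩
  rw [this]
  exact hemb.isClosedMap _ horth

lemma cone_caratheodory {ι : Type*} [Fintype ι] [DecidableEq ι] (v : ι → E) :
    ∀ (S : Finset ι) (c : ι → ℝ), (∀ i, 0 ≤ c i) → (∀ i, i ∉ S → c i = 0) →
    ∃ (T : Finset ι) (c' : ι → ℝ), LinearIndependent ℝ (fun i : T => v i) ∧
      (∀ i, 0 ≤ c' i) ∧ (∀ i, i ∉ T → c' i = 0) ∧ ∑ i, c' i • v i = ∑ i, c i • v i := by
  intro S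
  induction S using Finset.strongInduction with
  | _ S IH =>
  intro c hc hsupp
  by_cases hind : LinearIndependent ℝ (fun i : S => v i)
  · exact ⟨S, c, hind, hc, hsupp, rfl⟩
  obtain ⟨g, hg0, j, hgj⟩ := Fintype.not_linearIndependent_iff.mp hind
  have key : ∀ G : ι → ℝ, (∀ i, i ∉ S → G i = 0) → ∑ i, G i • v i = 0 → (∃ i, 0 < G i) →
      ∃ (T : Finset ι) (c' : ι → ℝ), LinearIndependent ℝ (fun i : T => v i) ∧
        (∀ i, 0 ≤ c' i) ∧ (∀ i, i ∉ T → c' i = 0) ∧ ∑ i, c' i • v i = ∑ i, c i • v i := by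
    rintro G hGsupp hGsum ⟨i₁, hi₁⟩
    have hi₁S : i₁ ∈ S := by
      by_contra h
      rw [hGsupp i₁ h] at hi₁
      exact lt_irrefl 0 hi₁
    set P := S.filter (fun i => 0 < G i) with hP
    have hPne : P.Nonempty := ⟨i₁, Finset.mem_filter.mpr ⟨hi₁S, hi₁⟩⟩
    obtain ⟨i₀, hi₀P, hmin⟩ := P.exists_min_image (fun i => c i / G i) hPne
    have hGi₀ : 0 < G i₀ := (Finset.mem_filter.mp hi₀P).2
    have hi₀S : i₀ ∈ S := (Finset.mem_filter.mp hi₀P).1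
    set t := c i₀ / G i₀ with ht
    have ht0 : 0 ≤ t := div_nonneg (hc i₀) hGi₀.le
    set c' : ι → ℝ := fun i => c i - t * G i with hc'def
    have hc' : ∀ i, 0 ≤ c' i := by
      intro i
      by_cases hGi : 0 < G i
      · have hiS : i ∈ S := by
          by_contra h
          rw [hGsupp i h] at hGi
          exact lt_irrefl 0 hGi
        have := hmin i (Finset.mem_filter.mpr ⟨hiS, hGi⟩)
        have h2 : t * G i ≤ c i := by
          rw [← le_div_iff₀ hGi]; exact this
        simpa [hc'def] using sub_nonneg.mpr h2
      · have : t * G i ≤ 0 := mul_nonpos_iff.mpr (Or.inl ⟨ht0, not_lt.mp hGi⟩)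
        have := sub_nonneg.mpr (this.trans (hc i))
        simp only [hc'def]
        nlinarith [hc i, this]
    have hci₀ : c' i₀ = 0 := by
      simp only [hc'def, ht]
      field_simp
      simp
    have hsupp' : ∀ i, i ∉ S.erase i₀ → c' i = 0 := by
      intro i hi
      by_cases h : i = i₀
      · rw [h]; exact hci₀
      · have hiS : i ∉ S := fun hiS => hi (Finset.mem_erase.mpr ⟨h, hiS⟩)
        simp [hc'def, hsupp i hiS, hGsupp i hiS]
    have hsum' : ∑ i, c' i • v i = ∑ i, c i • v i := by
      simp only [hc'def, sub_smul, Finset.sum_sub_distrib, mul_smul]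
      rw [← Finset.smul_sum, hGsum, smul_zero, sub_zero]
    obtain ⟨T, c'', hT, h1, h2, h3⟩ :=
      IH (S.erase i₀) (Finset.erase_ssubset hi₀S) c' hc' hsupp'
    exact ⟨T, c'', hT, h1, h2, h3.trans hsum'⟩
  set G : ι → ℝ := fun i => if h : i ∈ S then g ⟨i, h⟩ else 0 with hG
  have hGsupp : ∀ i, i ∉ S → G i = 0 := fun i hi => dif_neg hi
  have hGsum : ∑ i, G i • v i = 0 := by
    rw [← Finset.sum_subset (Finset.subset_univ S) (fun i _ hi => by rw [hGsupp i hi, zero_smul])]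
    rw [← Finset.sum_attach S (fun i => G i • v i)]
    calc ∑ i : S, G ↑i • v ↑i = ∑ i : S, g i • v ↑i := by
          apply Finset.sum_congr rfl
          intro i _
          rw [hG]; simp [i.2]
      _ = 0 := hg0
  have hGj : G ↑j = g j := by rw [hG]; simp [j.2]
  by_cases hpos : ∃ i, 0 < G i
  · exact key G hGsupp hGsum hpos
  · have hgneg : g j < 0 := by
      push_neg at hpos
      have h1 := hpos ↑j
      rw [hGj] at h1
      exact lt_of_le_of_ne h1 hgj
    have hneg : ∃ i, 0 < (-G) i := ⟨↑j, by simp only [Pi.neg_apply, hGj]; linarith⟩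
    refine key (-G) (fun i hi => by simp [hGsupp i hi]) ?_ hneg
    simp only [Pi.neg_apply, neg_smul, Finset.sum_neg_distrib, hGsum, neg_zero]

lemma isClosed_coneGen {ι : Type*} [Fintype ι] [FiniteDimensional ℝ E] (v : ι → E) :
    IsClosed (coneGen v) := by
  classical
  have heq : coneGen v = ⋃ T : Finset ι,
      {z | LinearIndependent ℝ (fun i : T => v i) ∧ z ∈ coneGen (fun i : T => v ↑i)} := by
    ext z
    simp only [Set.mem_iUnion, Set.mem_setOf_eq]
    constructor
    · rintro ⟨c, hc, rfl⟩
      obtain ⟨T, c', hT, h1, h2, h3⟩ := cone_caratheodory v Finset.univ c hc (by simp)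
      refine ⟨T, hT, fun i => c' ↑i, fun i => h1 ↑i, ?_⟩
      show ∑ i : T, c' ↑i • v ↑i = ∑ i : ι, c i • v i
      rw [Finset.sum_coe_sort T (fun i => c' i • v i),
        Finset.sum_subset (Finset.subset_univ T) (fun i _ hi => by rw [h2 i hi, zero_smul]), h3]
    · rintro ⟨T, hT, c, hc, rfl⟩
      refine ⟨fun i => if h : i ∈ T then c ⟨i, h⟩ else 0,
        fun i => by by_cases h : i ∈ T <;> simp [h, hc], ?_⟩
      show ∑ i : ι, (if h : i ∈ T then c ⟨i, h⟩ else 0) • v i = ∑ i : T, c i • v ↑i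
      rw [← Finset.sum_subset (Finset.subset_univ T) (fun i _ hi => by simp [hi]),
        ← Finset.sum_coe_sort T (fun i => (if h : i ∈ T then c ⟨i, h⟩ else 0) • v i)]
      apply Finset.sum_congr rfl
      intro i _
      simp [i.2]
  rw [heq]
  apply isClosed_iUnion_of_finite
  intro T
  by_cases hT : LinearIndependent ℝ (fun i : T => v i)
  · have : {z | LinearIndependent ℝ (fun i : T => v i) ∧ z ∈ coneGen (fun i : T => v ↑i)}
        = coneGen (fun i : T => v ↑i) := by
      ext z; simp [hT]
    rw [this]
    exact isClosed_coneGen_of_linearIndependent _ hT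
  · have : {z | LinearIndependent ℝ (fun i : T => v i) ∧ z ∈ coneGen (fun i : T => v ↑i)}
        = ∅ := by
      ext z; simp [hT]
    rw [this]
    exact isClosed_empty

lemma coneGen_subset_polar {ι : Type*} [Fintype ι] (A : ι → E) :
    coneGen A ⊆ polarCone {x : E | ∀ i, ⟪A i, x⟫ ≤ 0} := by
  rintro z ⟨c, hc, rfl⟩ x hx
  rw [inner_sum]
  apply Finset.sum_nonpos
  intro i _
  rw [real_inner_smul_right]
  exact mul_nonpos_iff.mpr (Or.inl ⟨hc i, (real_inner_comm (A i) x).trans_le (hx i)⟩)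

lemma polar_subset_coneGen [FiniteDimensional ℝ E] {ι : Type*} [Fintype ι] [DecidableEq ι]
    (A : ι → E) : polarCone {x : E | ∀ i, ⟪A i, x⟫ ≤ 0} ⊆ coneGen A := by
  intro z hz
  by_contra hznot
  let K : ConvexCone ℝ E :=
    { carrier := coneGen A
      smul_mem' := by
        rintro r hr _ ⟨c, hc, rfl⟩
        exact ⟨fun i => r * c i, fun i => mul_nonneg hr.le (hc i), by
          simp [Finset.smul_sum, mul_smul]⟩
      add_mem' := by
        rintro _ ⟨c, hc, rfl⟩ _ ⟨c', hc', rfl⟩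
        exact ⟨fun i => c i + c' i, fun i => add_nonneg (hc i) (hc' i), by
          simp [add_smul, Finset.sum_add_distrib]⟩ }
  have hne : (K : Set E).Nonempty := ⟨0, ⟨fun _ => 0, fun _ => le_refl 0, by simp⟩⟩
  have hclosed : IsClosed (K : Set E) := isClosed_coneGen A
  obtain ⟨y, hy1, hy2⟩ :=
    (show ∃ y, (∀ x ∈ (K : Set E), 0 ≤ ⟪x, y⟫) ∧ ⟪y, z⟫ < 0 by
      let P : ProperCone ℝ E :=
        { carrier := coneGen A
          add_mem' := fun ha hb => K.add_mem' ha hb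
          zero_mem' := ⟨fun _ => 0, fun _ => le_refl 0, by simp⟩
          smul_mem' := by
            rintro r _ ⟨c, hc, rfl⟩
            exact ⟨fun i => r * c i, fun i => mul_nonneg r.2 (hc i), by
              simp [Finset.smul_sum, mul_smul, NNReal.smul_def]⟩
          isClosed' := hclosed }
      obtain ⟨y, hy1, hy2⟩ := P.hyperplane_separation' (x₀ := z) hznot
      exact ⟨y, hy1, by rw [real_inner_comm]; exact hy2⟩)
  have hxC : ∀ i, ⟪A i, -y⟫ ≤ 0 := by
    intro i
    have hAi : A i ∈ coneGen A :=
      ⟨fun j => if j = i then 1 else 0,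
        fun j => by by_cases h : j = i <;> simp [h], by simp [ite_smul]⟩
    have h0 := hy1 (A i) hAi
    rw [inner_neg_right]
    linarith
  have hle := hz (-y) hxC
  rw [inner_neg_left] at hle
  linarith

lemma exists_polar_add [FiniteDimensional ℝ E]
    {C D : Set E} (hC : IsPolyhedralCone C) (hD : IsPolyhedralCone D) {z : E}
    (hz : z ∈ polarCone (C ∩ D)) :
    ∃ x' y', x' ∈ polarCone C ∧ y' ∈ polarCone D ∧ z = x' + y' := by
  obtain ⟨k, A, rfl⟩ := hC
  obtain ⟨l, B, rfl⟩ := hD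
  have hCD : ({x : E | ∀ i, ⟪A i, x⟫ ≤ 0} ∩ {x : E | ∀ i, ⟪B i, x⟫ ≤ 0}) =
      {x : E | ∀ i : Fin (k + l), ⟪Fin.append A B i, x⟫ ≤ 0} := by
    ext x
    constructor
    · rintro ⟨h1, h2⟩ i
      refine Fin.addCases (fun i => ?_) (fun i => ?_) i
      · simpa using h1 i
      · simpa using h2 i
    · intro h
      exact ⟨fun i => by simpa using h (Fin.castAdd l i),
             fun i => by simpa using h (Fin.natAdd k i)⟩
  rw [hCD] at hz
  obtain ⟨c, hc, hsum⟩ := polar_subset_coneGen (Fin.append A B) hz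
  refine ⟨∑ i, c (Fin.castAdd l i) • A i, ∑ i, c (Fin.natAdd k i) • B i,
    coneGen_subset_polar A ⟨fun i => c (Fin.castAdd l i), fun i => hc _, rfl⟩,
    coneGen_subset_polar B ⟨fun i => c (Fin.natAdd k i), fun i => hc _, rfl⟩, ?_⟩
  rw [← hsum, Fin.sum_univ_add]
  congr 1 <;> exact Finset.sum_congr rfl (fun i _ => by simp)

end Aux

/-- For polyhedral cones `C, D ⊆ ℝ^d`: `BL(C) ∧ BL(D) = BL(C ∩ D)` and
`BL(C) ∨ BL(D) = BL(C + D)`. -/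
theorem bconj_bdisj_biconicLift (d : ℕ) (C D : Set (EuclideanSpace ℝ (Fin d)))
    (hC : IsPolyhedralCone C) (hD : IsPolyhedralCone D) :
    bconj (biconicLift C) (biconicLift D) = biconicLift (C ∩ D) ∧
      bdisj (biconicLift C) (biconicLift D) = biconicLift (C + D) := by
  have h0C : (0 : EuclideanSpace ℝ (Fin d)) ∈ C := by
    obtain ⟨k, A, rfl⟩ := hC; intro i; simp
  have h0D : (0 : EuclideanSpace ℝ (Fin d)) ∈ D := by
    obtain ⟨l, B, rfl⟩ := hD; intro i; simp
  constructor
  · ext p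
    constructor
    · rintro ⟨x', y', ⟨hx1, hx2, hx3⟩, ⟨hy1, hy2, hy3⟩, hp⟩
      refine ⟨⟨hx1, hy1⟩, ?_, ?_⟩
      · intro x hx
        rw [hp, inner_add_right]
        have h1 := hx2 x hx.1
        have h2 := hy2 x hx.2
        linarith
      · rw [hp, inner_add_right, hx3, hy3, add_zero]
    · rintro ⟨⟨hp1C, hp1D⟩, hpol, hinn⟩
      obtain ⟨x', y', hx', hy', hzxy⟩ := exists_polar_add hC hD hpol
      have h1 : ⟪p.1, x'⟫ ≤ 0 := hx' p.1 hp1C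
      have h2 : ⟪p.1, y'⟫ ≤ 0 := hy' p.1 hp1D
      rw [hzxy, inner_add_right] at hinn
      exact ⟨x', y', ⟨hp1C, hx', by linarith⟩, ⟨hp1D, hy', by linarith⟩, hzxy⟩
  · ext p
    constructor
    · rintro ⟨x, y, ⟨hxC, hzC, hxz⟩, ⟨hyD, hzD, hyz⟩, hp⟩
      refine ⟨?_, ?_, ?_⟩
      · rw [hp]; exact Set.add_mem_add hxC hyD
      · rintro w hw
        rw [Set.mem_add] at hw
        obtain ⟨u, hu, v, hv, rfl⟩ := hw
        rw [inner_add_left]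
        have h1 := hzC u hu
        have h2 := hzD v hv
        linarith
      · rw [hp, inner_add_left, hxz, hyz, add_zero]
    · rintro ⟨hp1, hpol, hinn⟩
      rw [Set.mem_add] at hp1
      obtain ⟨x, hx, y, hy, hxy⟩ := hp1
      have hzC : p.2 ∈ polarCone C := by
        intro u hu
        have : u + 0 ∈ C + D := Set.add_mem_add hu h0D
        rw [add_zero] at this
        exact hpol u this
      have hzD : p.2 ∈ polarCone D := by
        intro v hv
        have : (0 : EuclideanSpace ℝ (Fin d)) + v ∈ C + D := Set.add_mem_add h0C hv
        rw [zero_add] at this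
        exact hpol v this
      have h1 : ⟪x, p.2⟫ ≤ 0 := hzC x hx
      have h2 : ⟪y, p.2⟫ ≤ 0 := hzD y hy
      rw [← hxy, inner_add_left] at hinn
      exact ⟨x, y, ⟨hx, hzC, by linarith⟩, ⟨hy, hzD, by linarith⟩, hxy.symm⟩
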